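/- Let φ(ρ) = ∑_{j≥0} a_j ρ^{j+1} be a formal power series with a_0 = 1 over a ℚ-algebra, and let ρ(φ) = ∑_{n≥1} (b_n/n!) φ^n be its compositional inverse. Then b_{n+1} = ∑_{k=1}^{n} ((n+k)!/n!) · B_{n,k}(-1!·a_1, -2!·a_2, ..., -n!·a_n) for all n ≥ 1, and b_1 = 1. -/

import Mathlib

open Finset PowerSeries

set_option maxRecDepth 8000
set_option maxHeartbeats 1000000

/-- Partial Bell polynomials `B n k`, defined by the standard recurrence
`B_{n,k} = ∑_{i=1}^{n-k+1} C(n-1, i-1) * x_i * B_{n-i, k-1}`, equivalently by the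
exponential generating function `∑ B_{n,k} u^k t^n/n! = exp (u * ∑_{j ≥ 1} x_j t^j/j!)`. -/
def bellPoly {R : Type*} [CommRing R] (x : ℕ → R) : ℕ → ℕ → R
  | 0, 0 => 1
  | 0, _+1 => 0
  | _+1, 0 => 0
  | n+1, k+1 => ∑ i ∈ Finset.range (n+1), (n.choose i : R) * x (i+1) * bellPoly x (n - i) k

/-- Composition `f ∘ g` of formal power series; this is the correct notion of
composition when `g` has zero constant coefficient (then `coeff n (g ^ k) = 0` for `k > n`). -/
noncomputable def compPS {R : Type*} [CommRing R] (f g : PowerSeries R) : PowerSeries R :=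
  PowerSeries.mk fun n =>
    ∑ k ∈ Finset.range (n + 1), (PowerSeries.coeff k f) * (PowerSeries.coeff n (g ^ k))

section Aux

lemma one_add_X_inv (n : ℕ) :
    ((1 + X)^(n+1) : PowerSeries ℤ) * (mk fun m => (-1)^m * ((n+m).choose n : ℤ)) = 1 := by
  have h := (invOneSubPow ℤ (n+1)).inv_val
  rw [invOneSubPow] at h
  simp only [Units.inv_mk] at h
  have h2 := congrArg (rescale (-1 : ℤ)) h
  rw [map_mul, map_pow, map_one] at h2
  have e1 : rescale (-1 : ℤ) (1 - X) = 1 + X := by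
    ext m
    rw [coeff_rescale, map_sub, map_add]
    rcases m with _ | _ | m <;>
      simp [coeff_one, PowerSeries.coeff_X]
  have e2 : rescale (-1 : ℤ) (mk fun m => ((n+m).choose n : ℤ))
      = mk fun m => (-1)^m * ((n+m).choose n : ℤ) := by
    ext m
    simp [coeff_rescale]
  rwa [e1, e2] at h2

variable {R : Type*} [CommRing R] [Algebra ℚ R]

omit [Algebra ℚ R] in
lemma coeff_zero_of_lt' {g w : PowerSeries R} (hg : constantCoeff g = 0)
    {m k : ℕ} (h : m < k) : coeff m (g ^ k * w) = 0 := by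
  have hx : (X : R⟦X⟧) ^ k ∣ g ^ k * w :=
    Dvd.dvd.mul_right (pow_dvd_pow_of_dvd (X_dvd_iff.mpr hg) k) w
  exact X_pow_dvd_iff.mp hx m h

omit [Algebra ℚ R] in
lemma coeff_pow_zero_of_lt {g : PowerSeries R} (hg : constantCoeff g = 0)
    {m k : ℕ} (h : m < k) : coeff m (g ^ k) = 0 := by
  simpa using coeff_zero_of_lt' (w := 1) hg h

lemma natCast_mul_eq_smul (m : ℕ) (r : R) : (m : R) * r = (m : ℚ) • r := by
  rw [Algebra.smul_def, map_natCast]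

lemma mul_natCast_eq_smul (m : ℕ) (r : R) : r * (m : R) = (m : ℚ) • r := by
  rw [mul_comm, natCast_mul_eq_smul]

lemma nsmul_cancel {m : ℕ} (hm : 0 < m) {z : R} (h : m • z = 0) : z = 0 := by
  have h2 : (m : ℚ) • z = 0 := by rwa [Nat.cast_smul_eq_nsmul]
  have hm' : (m : ℚ) ≠ 0 := by positivity
  simpa [hm'] using h2

lemma bellPoly_eq_coeff (x : ℕ → R) (F : PowerSeries R)
    (hF : ∀ j, coeff j F = if j = 0 then 0 else (j.factorial : ℚ)⁻¹ • x j) :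
    ∀ (k n : ℕ), bellPoly x n k
      = ((n.factorial : ℚ) * (k.factorial : ℚ)⁻¹) • coeff n (F ^ k) := by
  have hF0 : constantCoeff F = 0 := by
    rw [← coeff_zero_eq_constantCoeff_apply, hF]; simp
  intro k
  induction k with
  | zero =>
    intro n
    cases n with
    | zero => simp [bellPoly]
    | succ n => simp [bellPoly, coeff_one]
  | succ k ih =>
    intro n
    cases n with
    | zero =>
      have : coeff 0 (F ^ (k+1)) = 0 := coeff_pow_zero_of_lt hF0 (Nat.succ_pos k)
      simp [bellPoly, this]
    | succ n =>
      have hd : (PowerSeries.derivative (R := R)) (F ^ (k+1))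
          = (k+1 : ℕ) • ((PowerSeries.derivative (R := R)) F * F ^ k) := by
        rw [Derivation.leibniz_pow]
        simp [smul_smul, mul_comm]
      have hco := congrArg (coeff n) hd
      rw [coeff_derivative, map_nsmul, coeff_mul,
        Finset.Nat.sum_antidiagonal_eq_sum_range_succ_mk] at hco
      simp only [coeff_derivative] at hco
      set S := ∑ i ∈ Finset.range n.succ,
        coeff (i+1) F * ((i : R)+1) * coeff (n-i) (F^k) with hSdef
      have hne : ((n:ℚ)+1) ≠ 0 := by positivity
      have h1 : ((n:ℚ)+1) • coeff (n+1) (F^(k+1)) = ((k:ℚ)+1) • S := by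
        have e1 : ((n:ℚ)+1) • coeff (n+1) (F^(k+1))
            = coeff (n+1) (F^(k+1)) * ((n:R)+1) := by
          rw [Algebra.smul_def]; push_cast; ring
        have e2 : ((k:ℚ)+1) • S = (k+1) • S := by
          rw [← Nat.cast_smul_eq_nsmul ℚ]; push_cast; ring_nf
        rw [e1, e2, hco]
      have hC : coeff (n+1) (F^(k+1)) = (((n:ℚ)+1)⁻¹ * ((k:ℚ)+1)) • S := by
        rw [mul_smul]
        exact ((inv_smul_eq_iff₀ hne).mpr h1.symm).symm
      rw [bellPoly, hC, smul_smul, hSdef, Finset.smul_sum]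
      refine Finset.sum_congr rfl fun i hi => ?_
      have hin : i ≤ n := Nat.lt_succ_iff.mp (Finset.mem_range.mp hi)
      rw [ih, hF]
      rw [if_neg i.succ_ne_zero]
      have h2 : ((i:R)+1) = ((i+1 : ℕ) : R) := by push_cast; ring
      rw [h2, mul_natCast_eq_smul, natCast_mul_eq_smul]
      simp only [smul_mul_assoc, mul_smul_comm, smul_smul]
      congr 1
      have key : ((n.choose i : ℚ)) * (i.factorial) * ((n-i).factorial) = (n.factorial) := by
        exact_mod_cast Nat.choose_mul_factorial_mul_factorial hin
      have f1 : ((i.factorial : ℚ)) ≠ 0 := Nat.cast_ne_zero.mpr i.factorial_ne_zero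
      have f2 : (((n-i).factorial : ℚ)) ≠ 0 := Nat.cast_ne_zero.mpr (n-i).factorial_ne_zero
      have f3 : ((k.factorial : ℚ)) ≠ 0 := Nat.cast_ne_zero.mpr k.factorial_ne_zero
      simp only [Nat.factorial_succ]
      push_cast
      field_simp
      rw [← key]
      ring

lemma lagrange_aux {u v : R⟦X⟧} (huv : u * v = 1) (s : ℕ) :
    coeff (s+1) (v^(s+2) * (PowerSeries.derivative (R := R)) (X * u)) = 0 := by
  have hvu : v * u = 1 := by rw [mul_comm]; exact huv
  have hφ' : (PowerSeries.derivative (R := R)) (X * u)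
      = X * (PowerSeries.derivative (R := R)) u + u := by
    rw [Derivation.leibniz]
    simp [smul_eq_mul, mul_comm]
  have hDv : (PowerSeries.derivative (R := R)) v
      = -(v * v * (PowerSeries.derivative (R := R)) u) := by
    have h0 : u • (PowerSeries.derivative (R := R)) v
        + v • (PowerSeries.derivative (R := R)) u = 0 := by
      rw [← Derivation.leibniz, huv]; simp
    have h1 := congrArg (fun z => v * z) h0
    simp only [smul_eq_mul, mul_add, mul_zero] at h1
    have h2 : v * (u * (PowerSeries.derivative (R := R)) v)
        = (PowerSeries.derivative (R := R)) v := by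
      rw [← mul_assoc, hvu, one_mul]
    rw [h2] at h1
    linear_combination h1
  have hkey : (s+1) • (v^(s+2) * (PowerSeries.derivative (R := R)) (X * u))
      = (s+1) • v^(s+1) - X * (PowerSeries.derivative (R := R)) (v^(s+1)) := by
    have hp : (PowerSeries.derivative (R := R)) (v^(s+1))
        = (s+1) • (v^s • (PowerSeries.derivative (R := R)) v) := by
      simpa using Derivation.leibniz_pow (PowerSeries.derivative (R := R)) v (s+1)
    have hvs : v^(s+2) * u = v^(s+1) := by
      have h3 : v^(s+2) * u = v^(s+1) * (v * u) := by ring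
      rw [h3, hvu, mul_one]
    rw [hφ', hp, hDv]
    simp only [smul_eq_mul, smul_sub, mul_add, smul_add, nsmul_eq_mul]
    push_cast
    rw [← hvs]
    ring
  have hc := congrArg (coeff (s+1)) hkey
  rw [map_nsmul, map_sub, map_nsmul, coeff_succ_X_mul, coeff_derivative] at hc
  have h4 : ((s:R)+1) = ((s+1 : ℕ) : R) := by push_cast; ring
  rw [h4, mul_natCast_eq_smul, Nat.cast_smul_eq_nsmul, sub_self] at hc
  exact nsmul_cancel (Nat.succ_pos s) hc

lemma binom_aux (n : ℕ) (hn : 1 ≤ n) {u v : R⟦X⟧} (hu : constantCoeff u = 1)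
    (huv : u * v = 1) :
    coeff n (v^(n+1)) = ∑ k ∈ Finset.Icc 1 n, ((n+k).choose k : ℤ) • coeff n ((1 - u)^k) := by
  set A : R⟦X⟧ := u - 1 with hAdef
  have hA : constantCoeff A = 0 := by simp [hAdef, hu]
  set Q : Polynomial ℤ := (1 + Polynomial.X)^(n+1)
    * ∑ k ∈ Finset.range (n+1), Polynomial.C (((n+k).choose n : ℤ)) * (- Polynomial.X)^k
    with hQdef
  have hQc : ∀ j, j ≤ n → Q.coeff j = if j = 0 then 1 else 0 := by
    intro j hj
    have hW := one_add_X_inv n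
    set W : PowerSeries ℤ := mk fun m => (-1)^m * ((n+m).choose n : ℤ) with hWdef
    set P : PowerSeries ℤ := ∑ k ∈ Finset.range (n+1),
      PowerSeries.C ((-1)^k * ((n+k).choose n : ℤ)) * X^k with hPdef
    have hPW : (X : PowerSeries ℤ)^(n+1) ∣ (P - W) := by
      rw [X_pow_dvd_iff]
      intro m hm
      have hcP : coeff m P = (-1)^m * ((n+m).choose n : ℤ) := by
        rw [hPdef, map_sum]
        rw [Finset.sum_eq_single m]
        · rw [coeff_C_mul, coeff_X_pow, if_pos rfl, mul_one]
        · intro k hk hkm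
          rw [coeff_C_mul, coeff_X_pow, if_neg (fun h => hkm h.symm), mul_zero]
        · intro hm'
          exact absurd (Finset.mem_range.mpr (by omega)) hm'
      simp [map_sub, hcP, hWdef]
    obtain ⟨w, hw⟩ := hPW
    have hQP : (Q : PowerSeries ℤ) = (1 + X)^(n+1) * P := by
      rw [hQdef, Polynomial.coe_mul, Polynomial.coe_pow, Polynomial.coe_add,
        Polynomial.coe_one, Polynomial.coe_X, hPdef]
      congr 1
      rw [← Polynomial.coeToPowerSeries.ringHom_apply, map_sum]
      refine Finset.sum_congr rfl fun k _ => ?_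
      rw [Polynomial.coeToPowerSeries.ringHom_apply, Polynomial.coe_mul, Polynomial.coe_pow,
        Polynomial.coe_neg, Polynomial.coe_X, Polynomial.coe_C, neg_pow]
      rw [map_mul, map_pow, map_neg, map_one]
      ring
    have hfin : coeff j (Q : PowerSeries ℤ) = coeff j (1 : PowerSeries ℤ) := by
      rw [hQP]
      have hdiff : ((1:PowerSeries ℤ) + X)^(n+1) * P - (1 + X)^(n+1) * W
          = X^(n+1) * ((1+X)^(n+1) * w) := by rw [← mul_sub, hw]; ring
      have h0 : coeff j (((1:PowerSeries ℤ) + X)^(n+1) * P - (1 + X)^(n+1) * W) = 0 := by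
        rw [hdiff]
        exact X_pow_dvd_iff.mp ⟨_, rfl⟩ j (by omega)
      rw [map_sub, sub_eq_zero] at h0
      rw [hW] at h0
      exact h0
    rwa [Polynomial.coeff_coe, coeff_one] at hfin
  have hdvd : (Polynomial.X : Polynomial ℤ)^(n+1) ∣ (Q - 1) := by
    rw [Polynomial.X_pow_dvd_iff]
    intro d hd
    rw [Polynomial.coeff_sub, hQc d (by omega), Polynomial.coeff_one]
    rcases Nat.eq_zero_or_pos d with h0 | h0
    · subst h0; simp
    · simp [Nat.pos_iff_ne_zero.mp h0]
  obtain ⟨q, hq⟩ := hdvd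
  have hQeq : Q = 1 + Polynomial.X^(n+1) * q := by linear_combination hq
  have hQA := congrArg (Polynomial.aeval (R := ℤ) A) hQeq
  rw [hQdef] at hQA
  simp only [map_mul, map_pow, map_add, map_one, map_sum, map_neg, Polynomial.aeval_X,
    Polynomial.aeval_C] at hQA
  have h1A : (1 : R⟦X⟧) + A = u := by rw [hAdef]; ring
  rw [h1A] at hQA
  have hvQ := congrArg (fun z => v^(n+1) * z) hQA
  simp only [mul_add, mul_one] at hvQ
  have hvu : v^(n+1) * (u^(n+1) * ∑ k ∈ Finset.range (n+1),
      algebraMap ℤ R⟦X⟧ (((n+k).choose n : ℤ)) * (-A)^k)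
      = ∑ k ∈ Finset.range (n+1), algebraMap ℤ R⟦X⟧ (((n+k).choose n : ℤ)) * (-A)^k := by
    rw [← mul_assoc, ← mul_pow, mul_comm v u, huv, one_pow, one_mul]
  rw [hvu] at hvQ
  have hc := congrArg (coeff n) hvQ
  rw [map_add, map_sum] at hc
  have hzero : coeff n (v^(n+1) * (A^(n+1) * (Polynomial.aeval A) q)) = 0 := by
    have he : v^(n+1) * (A^(n+1) * (Polynomial.aeval A) q)
        = A^(n+1) * (v^(n+1) * (Polynomial.aeval A) q) := by ring
    rw [he]
    exact coeff_zero_of_lt' hA (Nat.lt_succ_self n)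
  rw [hzero, add_zero] at hc
  rw [← hc]
  have hterm : ∀ k, algebraMap ℤ R⟦X⟧ (((n+k).choose n : ℤ)) * (-A)^k
      = (((n+k).choose n : ℤ)) • ((1 - u)^k) := by
    intro k
    have hnA : -A = 1 - u := by rw [hAdef]; ring
    rw [← hnA, eq_intCast (algebraMap ℤ R⟦X⟧), ← zsmul_eq_mul]
  have hsplit : Finset.range (n+1) = insert 0 (Finset.Icc 1 n) := by
    ext t; simp; omega
  rw [hsplit, Finset.sum_insert (by simp)]
  have h00 : coeff n (algebraMap ℤ R⟦X⟧ (((n+0).choose n : ℤ)) * (-A)^0) = 0 := by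
    rw [hterm 0, map_zsmul]
    have h01 : coeff n ((1 - u : R⟦X⟧)^0) = 0 := by
      rw [pow_zero, coeff_one, if_neg (by omega)]
    rw [h01, smul_zero]
  rw [h00, zero_add]
  refine Finset.sum_congr rfl fun k hk => ?_
  rw [hterm k, map_zsmul]
  have hcs : (n+k).choose n = (n+k).choose k := by
    rw [← Nat.choose_symm (by omega)]
    congr 1
    omega
  rw [hcs]

end Aux

theorem inverse_diffeo_coefficients {R : Type*} [CommRing R] [Algebra ℚ R]
    (a b : ℕ → R) (ha0 : a 0 = 1) (φ ψ : PowerSeries R)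
    (hφ : ∀ n, coeff n φ = if n = 0 then 0 else a (n - 1))
    (hψ0 : constantCoeff ψ = 0)
    (hinv : compPS φ ψ = X) (hinv' : compPS ψ φ = X)
    (hb : ∀ n, 1 ≤ n → coeff n ψ = (n.factorial : ℚ)⁻¹ • b n) :
    b 1 = 1 ∧ ∀ n, 1 ≤ n →
      b (n + 1) = ∑ k ∈ Finset.Icc 1 n, (((n + k).factorial / n.factorial : ℕ) : R)
        * bellPoly (fun j => -((j.factorial : R) * a j)) n k := by
  classical
  set u : R⟦X⟧ := mk fun j => a j with hudef
  have hu1 : constantCoeff u = 1 := by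
    rw [← coeff_zero_eq_constantCoeff_apply, hudef, coeff_mk, ha0]
  have hφu : φ = X * u := by
    ext m
    rcases m with _ | m
    · rw [hφ 0]
      simp
    · rw [coeff_succ_X_mul, hφ (m+1)]
      simp [hudef]
  set v : R⟦X⟧ := invOfUnit u 1 with hvdef
  have huv : u * v = 1 := mul_invOfUnit u 1 (by simp [hu1])
  have hφ0 : constantCoeff φ = 0 := by
    rw [← coeff_zero_eq_constantCoeff_apply, hφ 0]; simp
  have hcomp : ∀ j, (∑ m ∈ Finset.range (j+1), coeff m ψ * coeff j (φ^m)) = coeff j X := by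
    intro j
    rw [← hinv']
    simp [compPS, coeff_mk]
  -- b 1 = 1
  have hb1 : b 1 = 1 := by
    have h1 := hcomp 1
    rw [Finset.sum_range_succ, Finset.sum_range_one] at h1
    rw [pow_zero, pow_one, coeff_one, hφ 1] at h1
    simp only [if_neg one_ne_zero, PowerSeries.coeff_X, if_pos rfl] at h1
    simp only [ha0, mul_one, mul_zero, zero_add] at h1
    have h2 := hb 1 le_rfl
    rw [h2] at h1
    simpa using h1
  refine ⟨hb1, fun n hn => ?_⟩
  -- Lagrange inversion: coeff n (v^(n+1)) = coeff (n+1) ψ * (n+1)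
  have hLag : coeff n (v^(n+1)) = coeff (n+1) ψ * ((n+1 : ℕ) : R) := by
    set S : R⟦X⟧ := ∑ m ∈ Finset.range (n+2), coeff m ψ • φ^m with hSdef
    have hScoeff : ∀ j, j ≤ n+1 → coeff j S = coeff j X := by
      intro j hj
      have hsum : coeff j S = ∑ m ∈ Finset.range (n+2), coeff m ψ * coeff j (φ^m) := by
        rw [hSdef, map_sum]
        exact Finset.sum_congr rfl fun m _ => by rw [map_smul, smul_eq_mul]
      rw [hsum, ← hcomp j]
      refine (Finset.sum_subset (Finset.range_subset_range.mpr (by omega)) ?_).symm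
      intro m hm hm'
      have hmj : j < m := by
        simp only [Finset.mem_range] at hm'
        omega
      rw [coeff_pow_zero_of_lt hφ0 hmj, mul_zero]
    have hDzero : ∀ j, j ≤ n → coeff j ((PowerSeries.derivative (R := R)) (S - X)) = 0 := by
      intro j hj
      rw [coeff_derivative, map_sub, hScoeff (j+1) (by omega), sub_self, zero_mul]
    have hDdvd : (X : R⟦X⟧)^(n+1) ∣ (PowerSeries.derivative (R := R)) (S - X) := by
      rw [X_pow_dvd_iff]
      intro m hm
      exact hDzero m (by omega)
    have hprod0 : coeff n ((PowerSeries.derivative (R := R)) (S - X) * v^(n+1)) = 0 := by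
      obtain ⟨w, hw⟩ := hDdvd
      rw [hw, mul_assoc]
      exact X_pow_dvd_iff.mp ⟨_, rfl⟩ n (by omega)
    have hsub : (PowerSeries.derivative (R := R)) (S - X)
        = (PowerSeries.derivative (R := R)) S - 1 := by
      rw [map_sub, derivative_X]
    rw [hsub, sub_mul, one_mul, map_sub, sub_eq_zero] at hprod0
    -- now expand derivative S
    have hDS : coeff n ((PowerSeries.derivative (R := R)) S * v^(n+1))
        = coeff (n+1) ψ * ((n+1 : ℕ) : R) := by
      rw [hSdef, map_sum, Finset.sum_mul, map_sum]
      have hterm : ∀ m ∈ Finset.range (n+2),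
          coeff n ((PowerSeries.derivative (R := R)) (coeff m ψ • φ^m) * v^(n+1))
          = if m = n+1 then coeff (n+1) ψ * ((n+1 : ℕ) : R) else 0 := by
        intro m hm
        have hexp : ((PowerSeries.derivative (R := R)) (coeff m ψ • φ^m)) * v^(n+1)
            = coeff m ψ • (m • (φ^(m-1) * (PowerSeries.derivative (R := R)) φ * v^(n+1))) := by
          rw [Derivation.map_smul, Derivation.leibniz_pow]
          simp only [smul_eq_mul, smul_mul_assoc]
        rw [hexp, map_smul, map_nsmul]
        rcases m with _ | m'
        · simp only [zero_smul, smul_zero]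
          rw [if_neg (by omega)]
        by_cases hmn : m' + 1 = n + 1
        · rw [if_pos hmn]
          have hmeq : m' = n := by omega
          rw [hmeq]
          have hv1 : constantCoeff v = 1 := by
            have hcc := congrArg (constantCoeff) huv
            rw [map_mul, hu1, one_mul, map_one] at hcc
            exact hcc
          have hDφ0 : constantCoeff ((PowerSeries.derivative (R := R)) φ) = 1 := by
            rw [← coeff_zero_eq_constantCoeff_apply, coeff_derivative, hφ 1]
            simp [ha0]
          have h1 : φ^(n+1-1) * (PowerSeries.derivative (R := R)) φ * v^(n+1)
              = X^n * (u^n * v^(n+1) * (PowerSeries.derivative (R := R)) φ) := by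
            rw [Nat.add_sub_cancel, hφu]
            ring
          rw [h1]
          have h2 := coeff_X_pow_mul (u^n * v^(n+1) * (PowerSeries.derivative (R := R)) φ) n 0
          rw [zero_add] at h2
          rw [h2, coeff_zero_eq_constantCoeff_apply, map_mul, map_mul, map_pow, map_pow,
            hu1, hv1, hDφ0]
          simp only [one_pow, one_mul, mul_one, nsmul_eq_mul, smul_eq_mul]
        · rw [if_neg hmn]
          have hmle : m' + 1 ≤ n := by
            simp only [Finset.mem_range] at hm
            omega
          obtain ⟨s, hs1, hs2⟩ : ∃ s, n - m' = s + 1 ∧ m' + (s+1) = n :=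
            ⟨n - m' - 1, by omega, by omega⟩
          have hvpow : u^m' * v^(n+1) = v^(s+2) := by
            have hne : (n+1) = m' + (s+2) := by omega
            rw [hne, pow_add, ← mul_assoc, ← mul_pow, huv, one_pow, one_mul]
          have h1 : φ^(m'+1-1) * (PowerSeries.derivative (R := R)) φ * v^(n+1)
              = X^m' * (v^(s+2) * (PowerSeries.derivative (R := R)) (X * u)) := by
            rw [Nat.add_sub_cancel, hφu, ← hvpow]
            ring
          rw [h1]
          have h2 := coeff_X_pow_mul (v^(s+2) * (PowerSeries.derivative (R := R)) (X * u)) m' (s+1)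
          have hidx : (s+1) + m' = n := by omega
          rw [hidx] at h2
          rw [h2, lagrange_aux huv s, smul_zero, smul_zero]
      rw [Finset.sum_congr rfl hterm, Finset.sum_ite_eq' (Finset.range (n+2)) (n+1)]
      rw [if_pos (Finset.self_mem_range_succ (n+1))]
    rw [← hprod0, hDS]
  -- binomial expansion
  have hbinom := binom_aux n hn hu1 huv
  -- Bell polynomial identification
  set x : ℕ → R := fun j => -((j.factorial : R) * a j) with hxdef
  have hFc : ∀ j, coeff j ((1 : R⟦X⟧) - u) = if j = 0 then 0 else (j.factorial : ℚ)⁻¹ • x j := by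
    intro j
    rw [map_sub, coeff_one, hudef, coeff_mk]
    rcases j with _ | j
    · simp [ha0]
    · rw [if_neg (Nat.succ_ne_zero j), if_neg (Nat.succ_ne_zero j), hxdef]
      simp only
      rw [natCast_mul_eq_smul, smul_neg, smul_smul,
        inv_mul_cancel₀ (Nat.cast_ne_zero.mpr (j+1).factorial_ne_zero), one_smul]
      ring
  have hbell := bellPoly_eq_coeff x ((1 : R⟦X⟧) - u) hFc
  -- final assembly
  have hfne : ((n.factorial : ℚ)) ≠ 0 := Nat.cast_ne_zero.mpr n.factorial_ne_zero
  have hbn : b (n+1) = ((n+1).factorial : ℚ) • coeff (n+1) ψ := by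
    rw [hb (n+1) (by omega), smul_smul,
      mul_inv_cancel₀ (Nat.cast_ne_zero.mpr (n+1).factorial_ne_zero), one_smul]
  rw [hbn]
  have hstep : ((n+1).factorial : ℚ) • coeff (n+1) ψ
      = (n.factorial : ℚ) • coeff n (v^(n+1)) := by
    rw [hLag, mul_natCast_eq_smul, smul_smul]
    congr 1
    rw [Nat.factorial_succ]
    push_cast
    ring
  rw [hstep, hbinom, Finset.smul_sum]
  refine Finset.sum_congr rfl fun k hk => ?_
  rw [hbell k n, natCast_mul_eq_smul, ← Int.cast_smul_eq_zsmul ℚ, smul_smul, smul_smul]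
  congr 1
  have hkk : k ≤ n + k := by omega
  have key : ((n+k).choose k : ℚ) * k.factorial * n.factorial = ((n+k).factorial : ℚ) := by
    have hkey := Nat.choose_mul_factorial_mul_factorial hkk
    have h2 : n + k - k = n := by omega
    rw [h2] at hkey
    exact_mod_cast hkey
  have hdiv : (((n+k).factorial / n.factorial : ℕ) : ℚ)
      = ((n+k).factorial : ℚ) / (n.factorial : ℚ) :=
    Nat.cast_div (Nat.factorial_dvd_factorial (by omega)) hfne
  have hkf : ((k.factorial : ℚ)) ≠ 0 := Nat.cast_ne_zero.mpr k.factorial_ne_zero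
  rw [hdiv]
  push_cast
  field_simp
  linear_combination key
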